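/- Let f : [0,∞] → [0,∞] be ISOD and let r = inf{x ∈ [0,∞] : f(x) < x} (with r = ∞ if this set is empty). Then B_f = B_g, where g : [0,∞] → [0,∞] is the function g(x) = min{f(x), r}. -/

import Mathlib

open MeasureTheory ENNReal Filter

noncomputable section

/-- The Hilbert space `L²(ℝ)` with Lebesgue measure. -/
abbrev L2R : Type := MeasureTheory.Lp ℂ 2 (MeasureTheory.volume : MeasureTheory.Measure ℝ)

/-- The Lebesgue measure of the support of (a representative of) `ξ ∈ L²(ℝ)`. -/
def musupp (ξ : L2R) : ℝ≥0∞ := MeasureTheory.volume (Function.support (ξ : ℝ → ℂ))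

/-- The support expansion function `Φ_a` of a bounded operator `a` on `L²(ℝ)`:
`Φ_a(x) = sup { μ(supp(aξ)) : μ(supp ξ) ≤ x }`. -/
def Phi (a : L2R →L[ℂ] L2R) (x : ℝ≥0∞) : ℝ≥0∞ :=
  ⨆ ξ : {ξ : L2R // musupp ξ ≤ x}, musupp (a ξ.1)

/-- The set `B_f` of operators controlled by `f`: both `Φ_a ≤ f` and `Φ_{a*} ≤ f`. -/
def Bset (f : ℝ≥0∞ → ℝ≥0∞) : Set (L2R →L[ℂ] L2R) :=
  {a | (∀ x, Phi a x ≤ f x) ∧ (∀ x, Phi (ContinuousLinearMap.adjoint a) x ≤ f x)}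

/-- `f : [0,∞] → [0,∞]` is ISOD: increasing, `f 0 = 0`, `f ∞ = sup_{t<∞} f t`, and the
slope to the origin `f x / x` is decreasing: `x * f y ≤ y * f x` for `0 < x ≤ y < ∞`. -/
def ISOD (f : ℝ≥0∞ → ℝ≥0∞) : Prop :=
  Monotone f ∧ f 0 = 0 ∧ (f ⊤ = ⨆ t ∈ Set.Iio (⊤ : ℝ≥0∞), f t) ∧
  ∀ x y : ℝ≥0∞, 0 < x → x ≤ y → y < ⊤ → x * f y ≤ y * f x

namespace SuppExpAux


lemma meas_support_congr {g h : ℝ → ℂ} (hgh : g =ᵐ[volume] h) :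
    volume (Function.support g) = volume (Function.support h) := by
  apply measure_congr
  rw [eventuallyEq_set]
  filter_upwards [hgh] with x hx
  simp [Function.mem_support, hx]

/-- Multiplication by the indicator of a measurable set, as an operator on `L²(ℝ)`. -/
def Pmul {T : Set ℝ} (hT : MeasurableSet T) : L2R →L[ℂ] L2R :=
  LinearMap.mkContinuous
    { toFun := fun ξ => ((Lp.memLp ξ).indicator hT).toLp (T.indicator ⇑ξ)
      map_add' := fun ξ η => by
        apply Lp.ext
        filter_upwards [MemLp.coeFn_toLp (E := ℂ) (p := 2) (μ := volume) (f := T.indicator ⇑(ξ+η)) (((Lp.memLp (ξ+η))).indicator hT),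
          Lp.coeFn_add ((Lp.memLp ξ).indicator hT).toLp (((Lp.memLp η)).indicator hT).toLp,
          MemLp.coeFn_toLp (E := ℂ) (p := 2) (μ := volume) (f := T.indicator ⇑ξ) ((Lp.memLp ξ).indicator hT),
          MemLp.coeFn_toLp (E := ℂ) (p := 2) (μ := volume) (f := T.indicator ⇑η) ((Lp.memLp η).indicator hT),
          Lp.coeFn_add ξ η] with x h1 h2 h3 h4 h5
        rw [h1, h2, Pi.add_apply, h3, h4]
        by_cases hx : x ∈ T
        · rw [Set.indicator_of_mem hx, Set.indicator_of_mem hx, Set.indicator_of_mem hx, h5]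
          rfl
        · rw [Set.indicator_of_notMem hx, Set.indicator_of_notMem hx,
            Set.indicator_of_notMem hx, add_zero]
      map_smul' := fun c ξ => by
        apply Lp.ext
        filter_upwards [MemLp.coeFn_toLp (E := ℂ) (p := 2) (μ := volume) (f := T.indicator ⇑(c • ξ)) (((Lp.memLp (c • ξ))).indicator hT),
          Lp.coeFn_smul c (((Lp.memLp ξ)).indicator hT).toLp,
          MemLp.coeFn_toLp (E := ℂ) (p := 2) (μ := volume) (f := T.indicator ⇑ξ) ((Lp.memLp ξ).indicator hT),
          Lp.coeFn_smul c ξ] with x h1 h2 h3 h4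
        simp only [RingHom.id_apply]
        rw [h1, h2, Pi.smul_apply, h3]
        by_cases hx : x ∈ T
        · rw [Set.indicator_of_mem hx, Set.indicator_of_mem hx, h4]
          rfl
        · rw [Set.indicator_of_notMem hx, Set.indicator_of_notMem hx, smul_zero] }
    1 (fun ξ => by
      simp only [LinearMap.coe_mk, AddHom.coe_mk, one_mul]
      rw [Lp.norm_toLp, Lp.norm_def]
      exact ENNReal.toReal_mono (Lp.eLpNorm_ne_top ξ) (eLpNorm_indicator_le _))

lemma Pmul_coeFn {T : Set ℝ} (hT : MeasurableSet T) (ξ : L2R) :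
    ⇑(Pmul hT ξ) =ᵐ[volume] T.indicator ⇑ξ :=
  MemLp.coeFn_toLp (E := ℂ) (p := 2) (μ := volume) (f := T.indicator ⇑ξ) ((Lp.memLp ξ).indicator hT)

lemma Pmul_add_compl {T : Set ℝ} (hT : MeasurableSet T) (ξ : L2R) :
    Pmul hT ξ + Pmul hT.compl ξ = ξ := by
  apply Lp.ext
  filter_upwards [Lp.coeFn_add (Pmul hT ξ) (Pmul hT.compl ξ), Pmul_coeFn hT ξ,
    Pmul_coeFn hT.compl ξ] with x h1 h2 h3
  rw [h1, Pi.add_apply, h2, h3]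
  exact congrFun (Set.indicator_self_add_compl T ⇑ξ) x



lemma exists_subset_meas_eq {A : Set ℝ} (hA : MeasurableSet A) {t : ℝ≥0∞}
    (ht : t ≤ volume A) (htop : t ≠ ⊤) :
    ∃ S : Set ℝ, MeasurableSet S ∧ S ⊆ A ∧ volume S = t := by
  rcases eq_or_ne t 0 with rfl | ht0
  · exact ⟨∅, MeasurableSet.empty, Set.empty_subset _, measure_empty⟩
  obtain ⟨B, hBm, hBA, hBt, hBfin⟩ :
      ∃ B : Set ℝ, MeasurableSet B ∧ B ⊆ A ∧ t ≤ volume B ∧ volume B < ⊤ := by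
    rcases lt_or_eq_of_le ht with hlt | heq
    · obtain ⟨B, h1, h2, h3, h4⟩ := Measure.exists_subset_measure_lt_top hA hlt
      exact ⟨B, h1, h2, h3.le, h4⟩
    · exact ⟨A, hA, subset_rfl, heq.le, heq ▸ lt_top_iff_ne_top.2 htop⟩
  rcases eq_or_lt_of_le hBt with heq | hlt
  · exact ⟨B, hBm, hBA, heq.symm⟩
  -- now t < volume B < ∞ and 0 < t
  set g : ℝ → ℝ := fun x => (volume (B ∩ Set.Iic x)).toReal with hg
  have hfin : ∀ x, volume (B ∩ Set.Iic x) ≠ ⊤ :=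
    fun x => (lt_of_le_of_lt (measure_mono Set.inter_subset_left) hBfin).ne
  have hmono : Monotone g := by
    intro x y hxy
    exact ENNReal.toReal_mono (hfin y)
      (measure_mono (Set.inter_subset_inter_right _ (Set.Iic_subset_Iic.2 hxy)))
  have hsplit : ∀ x y : ℝ, x ≤ y →
      volume (B ∩ Set.Iic y) = volume (B ∩ Set.Iic x) + volume (B ∩ Set.Ioc x y) := by
    intro x y hxy
    rw [← measure_union ?_ (hBm.inter measurableSet_Ioc)]
    · rw [← Set.inter_union_distrib_left, Set.Iic_union_Ioc_eq_Iic hxy]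
    · exact Set.disjoint_of_subset (Set.inter_subset_right)
        (Set.inter_subset_right) (Set.Iic_disjoint_Ioc le_rfl)
  have hlip : LipschitzWith 1 g := by
    apply LipschitzWith.of_dist_le_mul
    intro x y
    wlog hxy : y ≤ x generalizing x y
    · rw [dist_comm, dist_comm x y]; exact this y x (le_of_not_ge hxy)
    rw [Real.dist_eq, Real.dist_eq, abs_of_nonneg (sub_nonneg.2 (hmono hxy)),
      abs_of_nonneg (sub_nonneg.2 hxy)]
    simp only [NNReal.coe_one, one_mul]
    have h1 := hsplit y x hxy
    have h2 : volume (B ∩ Set.Ioc y x) ≤ ENNReal.ofReal (x - y) := by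
      calc volume (B ∩ Set.Ioc y x) ≤ volume (Set.Ioc y x) :=
            measure_mono Set.inter_subset_right
        _ = ENNReal.ofReal (x - y) := by rw [Real.volume_Ioc]
    have := ENNReal.toReal_mono ?_ (h1.le.trans (add_le_add le_rfl h2))
    · rw [ENNReal.toReal_add (hfin y) ENNReal.ofReal_ne_top,
        ENNReal.toReal_ofReal (sub_nonneg.2 hxy)] at this
      linarith [this]
    · exact ENNReal.add_ne_top.2 ⟨hfin y, ENNReal.ofReal_ne_top⟩
  have htop' : Tendsto g atTop (nhds (volume B).toReal) := by
    have h1 : Tendsto (fun x : ℝ => volume (B ∩ Set.Iic x)) atTop (nhds (volume B)) := by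
      have := tendsto_measure_iUnion_atTop (μ := volume)
        (s := fun x : ℝ => B ∩ Set.Iic x) ?_
      · rwa [← Set.inter_iUnion, Set.iUnion_Iic, Set.inter_univ] at this
      · intro x y hxy
        exact Set.inter_subset_inter_right _ (Set.Iic_subset_Iic.2 hxy)
    exact (ENNReal.tendsto_toReal hBfin.ne).comp h1
  have hbot : Tendsto g atBot (nhds 0) := by
    have h1 : Tendsto (fun x : ℝ => volume (B ∩ Set.Iic x)) atBot (nhds 0) := by
      have := tendsto_measure_iInter_atBot (μ := volume)
        (s := fun x : ℝ => B ∩ Set.Iic x)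
        (fun x => (hBm.inter measurableSet_Iic).nullMeasurableSet) ?_ ⟨0, hfin 0⟩
      · have he : ⋂ x : ℝ, B ∩ Set.Iic x = ∅ := by
          rw [← Set.inter_iInter]
          have : ⋂ x : ℝ, Set.Iic x = (∅ : Set ℝ) := by
            apply Set.eq_empty_iff_forall_notMem.2
            intro y hy
            have := Set.mem_iInter.1 hy (y - 1)
            simp at this; linarith
          rw [this, Set.inter_empty]
        rwa [he, measure_empty] at this
      · intro x y hxy
        exact Set.inter_subset_inter_right _ (Set.Iic_subset_Iic.2 hxy)
    have h2 : Tendsto ENNReal.toReal (nhds (0:ℝ≥0∞)) (nhds (0:ℝ≥0∞).toReal) :=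
      ENNReal.tendsto_toReal (by simp)
    have h3 := h2.comp h1
    rw [ENNReal.toReal_zero] at h3
    exact h3
  have htR : 0 < t.toReal := ENNReal.toReal_pos ht0 htop
  have htRB : t.toReal < (volume B).toReal :=
    ENNReal.toReal_strict_mono hBfin.ne hlt
  obtain ⟨x₀, hx₀⟩ : ∃ x₀, g x₀ < t.toReal := by
    have := hbot.eventually (eventually_lt_nhds htR)
    exact this.exists
  obtain ⟨x₁, hx₁⟩ : ∃ x₁, t.toReal < g x₁ := by
    have := htop'.eventually (eventually_gt_nhds htRB)
    exact this.exists
  have hx01 : x₀ ≤ x₁ := by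
    by_contra hcon
    exact absurd (hmono (le_of_not_ge hcon)) (by linarith)
  obtain ⟨x, _, hx⟩ := intermediate_value_Icc hx01 hlip.continuous.continuousOn
    ⟨hx₀.le, hx₁.le⟩
  refine ⟨B ∩ Set.Iic x, hBm.inter measurableSet_Iic,
    (Set.inter_subset_left).trans hBA, ?_⟩
  have : (volume (B ∩ Set.Iic x)).toReal = t.toReal := hx
  exact (ENNReal.toReal_eq_toReal_iff' (hfin x) htop).1 this



/-- Being supported (a.e.) in `S`. -/
def QS (S : Set ℝ) (η : L2R) : Prop := ∀ᵐ x ∂(volume : Measure ℝ), x ∉ S → (η : ℝ → ℂ) x = 0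

lemma QS_zero (S : Set ℝ) : QS S 0 := by
  filter_upwards [Lp.coeFn_zero ℂ 2 (volume : Measure ℝ)] with x hx _
  exact hx

lemma QS_add_smul {S : Set ℝ} {η₁ η₂ : L2R} (h1 : QS S η₁) (h2 : QS S η₂) (c : ℂ) :
    QS S (η₁ + c • η₂) := by
  filter_upwards [h1, h2, Lp.coeFn_add η₁ (c • η₂), Lp.coeFn_smul c η₂] with x hx1 hx2 hx3 hx4 hxS
  rw [hx3, Pi.add_apply, hx4, Pi.smul_apply, hx1 hxS, hx2 hxS, smul_zero, add_zero]

lemma measurableSet_support' (η : L2R) : MeasurableSet (Function.support (η : ℝ → ℂ)) := by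
  have : Function.support (η : ℝ → ℂ) = (η : ℝ → ℂ) ⁻¹' ({0}ᶜ) := by
    ext x; simp [Function.mem_support]
  rw [this]
  exact (Lp.stronglyMeasurable η).measurable (measurableSet_singleton 0).compl

/-- Union step: the union of the essential supports of `b η₁` and `b η₂`, for `η₁, η₂`
supported in `S`, is a.e. equal to the essential support of `b η₃` for some `η₃`
supported in `S`. -/
lemma union_step (b : L2R →L[ℂ] L2R) {S : Set ℝ} {η₁ η₂ : L2R}
    (h1 : QS S η₁) (h2 : QS S η₂) :
    ∃ η₃ : L2R, QS S η₃ ∧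
      (Function.support ((b η₁ : ℝ → ℂ)) ∪ Function.support ((b η₂ : ℝ → ℂ))
        : Set ℝ) =ᵐ[volume] Function.support ((b η₃ : ℝ → ℂ)) := by
  set g₁ : ℝ → ℂ := (b η₁ : ℝ → ℂ)
  set g₂ : ℝ → ℂ := (b η₂ : ℝ → ℂ)
  set N : ℝ → Set ℝ := fun c => {x | g₁ x = -(c : ℂ) * g₂ x ∧ g₂ x ≠ 0}
  have hNmeas : ∀ c : ℝ, MeasurableSet (N c) := by
    intro c
    have hm1 : Measurable g₁ := (Lp.stronglyMeasurable (b η₁)).measurable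
    have hm2 : Measurable g₂ := (Lp.stronglyMeasurable (b η₂)).measurable
    have : N c = ((fun x => g₁ x + (c : ℂ) * g₂ x) ⁻¹' {0}) ∩ (g₂ ⁻¹' ({0}ᶜ)) := by
      ext x
      simp only [N, Set.mem_setOf_eq, Set.mem_inter_iff, Set.mem_preimage,
        Set.mem_singleton_iff, Set.mem_compl_iff]
      constructor
      · rintro ⟨ha, hb⟩; exact ⟨by rw [ha]; ring, hb⟩
      · rintro ⟨ha, hb⟩; exact ⟨by linear_combination ha, hb⟩
    rw [this]
    exact ((hm1.add (hm2.const_mul (c : ℂ))) (measurableSet_singleton 0)).inter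
      (hm2 (measurableSet_singleton 0).compl)
  have hdisj : Pairwise (Function.onFun Disjoint N) := by
    intro c c' hcc'
    rw [Function.onFun, Set.disjoint_left]
    rintro x ⟨ha, hb⟩ ⟨ha', _⟩
    apply hcc'
    have := ha.symm.trans ha'
    field_simp at this
    simpa using this
  have hcount : Set.Countable {c : ℝ | 0 < volume (N c)} :=
    Measure.countable_meas_pos_of_disjoint_iUnion hNmeas hdisj
  obtain ⟨c, hc⟩ : ∃ c : ℝ, c ∉ ({c : ℝ | 0 < volume (N c)} ∪ {0}) := by
    by_contra hall
    push_neg at hall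
    exact Set.not_countable_univ ((Set.eq_univ_of_forall hall) ▸
      (hcount.union (Set.countable_singleton 0)))
  have hc0 : (c : ℂ) ≠ 0 := by
    intro h
    exact hc (Set.mem_union_right _ (by simpa using (Complex.ofReal_eq_zero.1 h)))
  have hcnull : volume (N c) = 0 := by
    by_contra h
    exact hc (Set.mem_union_left _ (pos_iff_ne_zero.2 h))
  refine ⟨η₁ + (c : ℂ) • η₂, QS_add_smul h1 h2 (c : ℂ), ?_⟩
  rw [eventuallyEq_set]
  have hae : (b (η₁ + (c : ℂ) • η₂) : ℝ → ℂ) =ᵐ[volume] fun x => g₁ x + (c : ℂ) * g₂ x := by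
    have : b (η₁ + (c : ℂ) • η₂) = b η₁ + (c : ℂ) • b η₂ := by rw [map_add, _root_.map_smul]
    rw [this]
    filter_upwards [Lp.coeFn_add (b η₁) ((c : ℂ) • b η₂), Lp.coeFn_smul (c : ℂ) (b η₂)] with x hx1 hx2
    rw [hx1, Pi.add_apply, hx2, Pi.smul_apply, smul_eq_mul]
  have hNae : ∀ᵐ x ∂(volume : Measure ℝ), x ∉ N c := by
    rw [ae_iff]; simpa using hcnull
  filter_upwards [hae, hNae] with x hx hxN
  simp only [Set.mem_union, Function.mem_support, hx]
  constructor
  · rintro (h | h) hsum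
    · rcases eq_or_ne (g₂ x) 0 with h2 | h2
      · rw [h2, mul_zero, add_zero] at hsum; exact h hsum
      · exact hxN ⟨by linear_combination hsum, h2⟩
    · rcases eq_or_ne (g₂ x) 0 with h2 | h2
      · exact h h2
      · exact hxN ⟨by linear_combination hsum, h2⟩
  · intro h
    by_contra hcon
    push_neg at hcon
    obtain ⟨ha, hb⟩ := hcon
    exact h (by rw [ha, hb, mul_zero, add_zero])


lemma exists_envelope (b : L2R →L[ℂ] L2R) (c : ℝ≥0∞) (hc : c ≠ ⊤) (S : Set ℝ)
    (hb : ∀ η : L2R, QS S η → volume (Function.support (b η : ℝ → ℂ)) ≤ c) :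
    ∃ T : Set ℝ, MeasurableSet T ∧ volume T ≤ c ∧
      ∀ η : L2R, QS S η → ∀ᵐ x ∂(volume : Measure ℝ), x ∉ T → (b η : ℝ → ℂ) x = 0 := by
  classical
  set A : L2R → Set ℝ := fun η => Function.support (b η : ℝ → ℂ) with hA
  set M : ℝ≥0∞ := ⨆ η : {η : L2R // QS S η}, volume (A η.1) with hM
  have hMc : M ≤ c := iSup_le fun η => hb η.1 η.2
  have hMtop : M ≠ ⊤ := (hMc.trans_lt (lt_top_iff_ne_top.2 hc)).ne
  have hseq : ∀ n : ℕ, ∃ ηn : L2R, QS S ηn ∧ M - ((n : ℝ≥0∞) + 1)⁻¹ ≤ volume (A ηn) := by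
    intro n
    rcases eq_or_ne (M - ((n : ℝ≥0∞) + 1)⁻¹) 0 with h0 | hne
    · exact ⟨0, QS_zero S, by simp [h0]⟩
    · have hMne : M ≠ 0 := by
        intro h
        apply hne
        rw [h, zero_tsub]
      have hlt : M - ((n : ℝ≥0∞) + 1)⁻¹ < M :=
        ENNReal.sub_lt_self hMtop hMne (by simp)
      rw [hM, lt_iSup_iff] at hlt
      obtain ⟨ηn, hηn⟩ := hlt
      exact ⟨ηn.1, ηn.2, hηn.le⟩
  choose η hQ hle using hseq
  set T : Set ℝ := ⋃ n, A (η n) with hT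
  have hTm : MeasurableSet T := MeasurableSet.iUnion fun n => measurableSet_support' _
  have hfin : ∀ (η' : L2R), QS S η' → ∀ n : ℕ,
      ∃ η₃ : L2R, QS S η₃ ∧
        ((A η' ∪ ⋃ i ∈ Finset.range n, A (η i) : Set ℝ)) =ᵐ[volume] A η₃ := by
    intro η' hη' n
    induction n with
    | zero =>
      refine ⟨η', hη', ?_⟩
      rw [show (⋃ i ∈ Finset.range 0, A (η i)) = (∅ : Set ℝ) by simp, Set.union_empty]
      exact Filter.EventuallyEq.refl _ _
    | succ k ih =>
      obtain ⟨η₃, hQ₃, hae₃⟩ := ih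
      obtain ⟨η₄, hQ₄, hae₄⟩ := union_step b hQ₃ (hQ k)
      refine ⟨η₄, hQ₄, ?_⟩
      have hset : (A η' ∪ ⋃ i ∈ Finset.range (k + 1), A (η i))
          = (A η' ∪ ⋃ i ∈ Finset.range k, A (η i)) ∪ A (η k) := by
        rw [Finset.range_add_one]
        ext x
        simp only [Set.mem_union, Set.mem_iUnion, Finset.mem_insert, Finset.mem_range]
        constructor
        · rintro (h | ⟨i, (rfl | hi), hx⟩)
          · exact Or.inl (Or.inl h)
          · exact Or.inr hx
          · exact Or.inl (Or.inr ⟨i, hi, hx⟩)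
        · rintro ((h | ⟨i, hi, hx⟩) | h)
          · exact Or.inl h
          · exact Or.inr ⟨i, Or.inr hi, hx⟩
          · exact Or.inr ⟨k, Or.inl rfl, h⟩
      rw [hset]
      exact (hae₃.union (Filter.EventuallyEq.refl _ _)).trans hae₄
  have hbound : ∀ (η' : L2R), QS S η' → volume (A η' ∪ T) ≤ M := by
    intro η' hη'
    have hU : A η' ∪ T = ⋃ n, (A η' ∪ ⋃ i ∈ Finset.range n, A (η i)) := by
      rw [← Set.union_iUnion]
      congr 1
      ext x
      simp only [Set.mem_iUnion, hT, Finset.mem_range]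
      constructor
      · rintro ⟨n, hx⟩
        exact ⟨n + 1, n, Nat.lt_succ_self n, hx⟩
      · rintro ⟨n, i, _, hx⟩
        exact ⟨i, hx⟩
    have hmono : Monotone fun n : ℕ => A η' ∪ ⋃ i ∈ Finset.range n, A (η i) := by
      intro m n hmn
      apply Set.union_subset_union_right
      apply Set.biUnion_subset_biUnion_left
      intro i hi
      exact Finset.mem_coe.2 (Finset.mem_range.2
        (lt_of_lt_of_le (Finset.mem_range.1 (Finset.mem_coe.1 hi)) hmn))
    rw [hU, hmono.measure_iUnion]
    apply iSup_le
    intro n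
    obtain ⟨η₃, hQ₃, hae₃⟩ := hfin η' hη' n
    rw [measure_congr hae₃]
    exact le_iSup (fun (ζ : {ζ : L2R // QS S ζ}) => volume (A ζ.1)) ⟨η₃, hQ₃⟩
  have hTM : volume T ≤ M :=
    le_trans (measure_mono Set.subset_union_right) (hbound (η 0) (hQ 0))
  have hMT : M ≤ volume T := by
    apply ENNReal.le_of_forall_pos_le_add
    intro ε hε _
    obtain ⟨n, hn⟩ := ENNReal.exists_inv_nat_lt
      (show (ε : ℝ≥0∞) ≠ 0 by exact_mod_cast hε.ne')
    have h1 : M ≤ volume (A (η n)) + ((n : ℝ≥0∞) + 1)⁻¹ :=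
      tsub_le_iff_right.1 (hle n)
    have h2 : volume (A (η n)) ≤ volume T :=
      measure_mono (Set.subset_iUnion (fun m => A (η m)) n)
    have h3 : ((n : ℝ≥0∞) + 1)⁻¹ ≤ (n : ℝ≥0∞)⁻¹ :=
      ENNReal.inv_le_inv.2 le_self_add
    exact h1.trans (add_le_add h2 (h3.trans hn.le))
  refine ⟨T, hTm, hTM.trans hMc, ?_⟩
  intro η' hη'
  have hnull : volume (A η' \ T) = 0 := by
    have h2 : A η' \ T = (A η' ∪ T) \ T := Set.union_diff_right.symm
    have h1 : volume ((A η' ∪ T) \ T) = volume (A η' ∪ T) - volume T :=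
      measure_diff Set.subset_union_right hTm.nullMeasurableSet
        (hTM.trans_lt (lt_top_iff_ne_top.2 hMtop)).ne
    rw [h2, h1]
    exact tsub_eq_zero_of_le (le_trans (hbound η' hη') hMT)
  rw [ae_iff]
  apply measure_mono_null ?_ hnull
  intro x hx
  rw [Set.mem_setOf_eq, Classical.not_imp] at hx
  exact ⟨Function.mem_support.2 hx.2, hx.1⟩


local notation "⟪" x ", " y "⟫" => @inner ℂ _ _ x y

lemma inner_zero (u v : L2R)
    (h : ∀ᵐ x ∂(volume : Measure ℝ), (u : ℝ → ℂ) x = 0 ∨ (v : ℝ → ℂ) x = 0) :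
    ⟪u, v⟫ = (0 : ℂ) := by
  rw [L2.inner_def]
  rw [← integral_zero ℝ ℂ]
  apply integral_congr_ae
  filter_upwards [h] with x hx
  rcases hx with hx | hx <;> simp [RCLike.inner_apply, hx]

lemma key (f : ℝ≥0∞ → ℝ≥0∞) (hmono : Monotone f) (a : L2R →L[ℂ] L2R)
    (ha : ∀ x, Phi a x ≤ f x) (ha' : ∀ x, Phi (ContinuousLinearMap.adjoint a) x ≤ f x)
    (ξ : L2R) : musupp (a ξ) ≤ sInf {x : ℝ≥0∞ | f x < x} := by
  by_contra hcon
  push_neg at hcon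
  obtain ⟨t, htf, htm⟩ := sInf_lt_iff.1 hcon
  have htt : t ≠ ⊤ := ne_top_of_lt htm
  obtain ⟨S, hSm, hSA, hSvol⟩ := exists_subset_meas_eq (measurableSet_support' (a ξ)) htm.le htt
  set b := ContinuousLinearMap.adjoint a with hb
  have hftop : f t ≠ ⊤ := ne_top_of_lt (htf.trans_le le_top)
  have hbound : ∀ η : L2R, QS S η → volume (Function.support (b η : ℝ → ℂ)) ≤ f t := by
    intro η hη
    have hμη : musupp η ≤ t := by
      rw [← hSvol]
      apply measure_mono_ae
      filter_upwards [hη] with x hx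
      intro hmem
      by_contra hxS
      exact hmem (hx hxS)
    calc volume (Function.support (b η : ℝ → ℂ))
        ≤ Phi b t := le_iSup (fun (ζ : {ζ : L2R // musupp ζ ≤ t}) => musupp (b ζ.1)) ⟨η, hμη⟩
      _ ≤ f t := ha' t
  obtain ⟨T, hTm, hTvol, hTsupp⟩ := exists_envelope b (f t) hftop S hbound
  set ζ := Pmul hTm.compl ξ with hζ
  set w := Pmul hSm (a ζ) with hw
  have hQw : QS S w := by
    filter_upwards [Pmul_coeFn hSm (a ζ)] with x hx hxS
    rw [hx, Set.indicator_of_notMem hxS]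
  have hw0 : w = 0 := by
    rw [← inner_self_eq_zero (𝕜 := ℂ)]
    have h1 : ⟪w, a ζ - w⟫ = (0 : ℂ) := by
      apply inner_zero
      filter_upwards [Pmul_coeFn hSm (a ζ), Lp.coeFn_sub (a ζ) w] with x hx hx2
      by_cases hxS : x ∈ S
      · right; rw [hx2, Pi.sub_apply, hx, Set.indicator_of_mem hxS, sub_self]
      · left; rw [hx, Set.indicator_of_notMem hxS]
    have h2 : ⟪w, a ζ⟫ = (0 : ℂ) := by
      have h3 : ⟪b w, ζ⟫ = (0 : ℂ) := by
        apply inner_zero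
        filter_upwards [hTsupp w hQw, Pmul_coeFn hTm.compl ξ] with x hx hx2
        by_cases hxT : x ∈ T
        · right
          rw [hx2, Set.indicator_of_notMem (by simpa using hxT)]
        · left; exact hx hxT
      rw [← h3, hb, ContinuousLinearMap.adjoint_inner_left]
    have h4 : ⟪w, w⟫ = ⟪w, a ζ⟫ - ⟪w, a ζ - w⟫ := by
      rw [inner_sub_right]; ring
    rw [h4, h1, h2, sub_zero]
  have hdecomp : Pmul hSm (a ξ) = Pmul hSm (a (Pmul hTm ξ)) := by
    conv_lhs => rw [← Pmul_add_compl hTm ξ]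
    rw [map_add, map_add, ← hζ, ← hw, hw0, add_zero]
  have hlow : t ≤ musupp (Pmul hSm (a ξ)) := by
    rw [← hSvol]
    apply measure_mono_ae
    filter_upwards [Pmul_coeFn hSm (a ξ)] with x hx
    intro hxS
    show (Pmul hSm (a ξ) : ℝ → ℂ) x ≠ 0
    rw [hx, Set.indicator_of_mem hxS]
    exact hSA hxS
  have hμT : musupp (Pmul hTm ξ) ≤ f t := by
    refine le_trans ?_ hTvol
    apply measure_mono_ae
    filter_upwards [Pmul_coeFn hTm ξ] with x hx
    intro hxsupp
    by_contra hxT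
    exact hxsupp (by rw [hx, Set.indicator_of_notMem hxT])
  have hup : musupp (a (Pmul hTm ξ)) ≤ f (f t) :=
    le_trans
      (le_iSup (fun (ζ' : {ζ' : L2R // musupp ζ' ≤ f t}) => musupp (a ζ'.1)) ⟨_, hμT⟩)
      (ha (f t))
  have hup2 : musupp (Pmul hSm (a (Pmul hTm ξ))) ≤ f (f t) := by
    refine le_trans (measure_mono_ae ?_) hup
    filter_upwards [Pmul_coeFn hSm (a (Pmul hTm ξ))] with x hx
    intro hxsupp
    have hxsupp' : (Pmul hSm (a (Pmul hTm ξ)) : ℝ → ℂ) x ≠ 0 := hxsupp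
    show (a (Pmul hTm ξ) : ℝ → ℂ) x ≠ 0
    intro h0
    apply hxsupp'
    rw [hx]
    by_cases hxS : x ∈ S
    · rw [Set.indicator_of_mem hxS, h0]
    · rw [Set.indicator_of_notMem hxS]
  have hcontra : t ≤ f (f t) := by
    rw [hdecomp] at hlow
    exact hlow.trans hup2
  exact absurd (hcontra.trans_lt ((hmono htf.le).trans_lt htf)) (lt_irrefl t)

end SuppExpAux

/-- For ISOD `f` and `r = inf {x : f x < x}` (`∞` if empty, as `sInf ∅ = ⊤`),
one has `B_f = B_{min(f, r)}`. -/
theorem Bset_eq_Bset_min (f : ℝ≥0∞ → ℝ≥0∞) (hf : ISOD f) :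
    Bset f = Bset (fun x => min (f x) (sInf {x : ℝ≥0∞ | f x < x})) := by
  ext a
  constructor
  · rintro ⟨h1, h2⟩
    refine ⟨fun x => le_min (h1 x) ?_, fun x => le_min (h2 x) ?_⟩
    · exact iSup_le fun ξ => SuppExpAux.key f hf.1 a h1 h2 ξ.1
    · refine iSup_le fun ξ => SuppExpAux.key f hf.1 (ContinuousLinearMap.adjoint a) h2 ?_ ξ.1
      intro x
      rw [ContinuousLinearMap.adjoint_adjoint]
      exact h1 x
  · rintro ⟨h1, h2⟩
    exact ⟨fun x => (h1 x).trans (min_le_left _ _), fun x => (h2 x).trans (min_le_left _ _)⟩
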